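/- Let g₁, g₂ : [−1,1] → [0,∞) be even functions with g_i increasing on [0,1]. Then the function φ ↦ ∫_{S²} g₁(ȳ · (sin φ, 0, cos φ)) g₂(ȳ · (0,0,1)) dȳ is nonincreasing on [0, π/2]. -/

import Mathlib

open Real MeasureTheory
open scoped RealInnerProductSpace ENNReal NNReal

noncomputable abbrev E3 : Type := EuclideanSpace ℝ (Fin 3)

noncomputable def uvec (α : ℝ) : E3 := (WithLp.equiv 2 (Fin 3 → ℝ)).symm ![Real.sin α, 0, Real.cos α]

lemma inner_uvec (y : E3) (α : ℝ) : ⟪y, uvec α⟫ = y 0 * Real.sin α + y 2 * Real.cos α := by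
  simp [uvec, PiLp.inner_apply, Fin.sum_univ_three, WithLp.equiv_symm_apply, PiLp.toLp_apply]; ring

lemma inner_e3 (y : E3) : ⟪y, (WithLp.equiv 2 (Fin 3 → ℝ)).symm ![0, 0, 1]⟫ = y 2 := by
  simp [PiLp.inner_apply, Fin.sum_univ_three, WithLp.equiv_symm_apply, PiLp.toLp_apply]

lemma norm_uvec (α : ℝ) : ‖uvec α‖ = 1 := by
  rw [EuclideanSpace.norm_eq]
  simp only [uvec, Fin.sum_univ_three, WithLp.equiv_symm_apply, PiLp.toLp_apply,
    Matrix.cons_val_zero, Matrix.cons_val_one, Matrix.head_cons, Matrix.cons_val_two, Matrix.tail_cons,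
    Real.norm_eq_abs, sq_abs]
  rw [show Real.sin α ^ 2 + 0 ^ 2 + Real.cos α ^ 2 = 1 by nlinarith [sin_sq_add_cos_sq α]]
  exact Real.sqrt_one

noncomputable def refl3 (ψ : ℝ) (y : E3) : E3 :=
  (WithLp.equiv 2 (Fin 3 → ℝ)).symm
    ![ -Real.cos ψ * y 0 + Real.sin ψ * y 2, y 1, Real.sin ψ * y 0 + Real.cos ψ * y 2]

lemma refl3_0 (ψ : ℝ) (y : E3) : refl3 ψ y 0 = -Real.cos ψ * y 0 + Real.sin ψ * y 2 := by
  simp [refl3, WithLp.equiv_symm_apply, PiLp.toLp_apply]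
lemma refl3_1 (ψ : ℝ) (y : E3) : refl3 ψ y 1 = y 1 := by
  simp [refl3, WithLp.equiv_symm_apply, PiLp.toLp_apply]
lemma refl3_2 (ψ : ℝ) (y : E3) : refl3 ψ y 2 = Real.sin ψ * y 0 + Real.cos ψ * y 2 := by
  simp [refl3, WithLp.equiv_symm_apply, PiLp.toLp_apply]

lemma refl3_invol (ψ : ℝ) : Function.Involutive (refl3 ψ) := by
  intro y
  have h := sin_sq_add_cos_sq ψ
  refine PiLp.ext fun i => ?_
  fin_cases i
  · show refl3 ψ (refl3 ψ y) 0 = y 0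
    rw [refl3_0, refl3_0, refl3_2]; linear_combination (y 0) * h
  · show refl3 ψ (refl3 ψ y) 1 = y 1
    rw [refl3_1, refl3_1]
  · show refl3 ψ (refl3 ψ y) 2 = y 2
    rw [refl3_2, refl3_0, refl3_2]; linear_combination (y 2) * h

lemma refl3_isometry (ψ : ℝ) : Isometry (refl3 ψ) := by
  apply Isometry.of_dist_eq
  intro x y
  have h := sin_sq_add_cos_sq ψ
  rw [EuclideanSpace.dist_eq, EuclideanSpace.dist_eq]
  congr 1
  simp only [Fin.sum_univ_three, refl3_0, refl3_1, refl3_2, Real.dist_eq, sq_abs]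
  linear_combination ((x 0 - y 0)^2 + (x 2 - y 2)^2) * h

noncomputable def reflIso (ψ : ℝ) : E3 ≃ᵢ E3 :=
  { toEquiv := Function.Involutive.toPerm _ (refl3_invol ψ),
    isometry_toFun := refl3_isometry ψ }

lemma reflIso_apply (ψ : ℝ) (y : E3) : reflIso ψ y = refl3 ψ y := rfl

lemma refl3_preimage_sphere (ψ : ℝ) :
    refl3 ψ ⁻¹' (Metric.sphere (0:E3) 1) = Metric.sphere (0:E3) 1 := by
  ext y
  have h0 : refl3 ψ 0 = 0 := by
    refine PiLp.ext fun i => ?_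
    fin_cases i
    · show refl3 ψ 0 0 = (0:E3) 0; rw [refl3_0]; simp
    · show refl3 ψ 0 1 = (0:E3) 1; rw [refl3_1]
    · show refl3 ψ 0 2 = (0:E3) 2; rw [refl3_2]; simp
  simp only [Set.mem_preimage, Metric.mem_sphere]
  rw [show dist (refl3 ψ y) 0 = dist y 0 by
    conv_lhs => rw [← h0]
    exact (refl3_isometry ψ).dist_eq y 0]

lemma refl3_measurePreserving (ψ : ℝ) :
    MeasurePreserving (refl3 ψ) ((μH[2] : Measure E3).restrict (Metric.sphere (0:E3) 1))
      ((μH[2] : Measure E3).restrict (Metric.sphere (0:E3) 1)) := by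
  have h : MeasurePreserving (refl3 ψ) (μH[2] : Measure E3) (μH[2] : Measure E3) :=
    (reflIso ψ).measurePreserving_hausdorffMeasure 2
  have h2 := h.restrict_preimage (s := Metric.sphere (0:E3) 1) (Metric.isClosed_sphere.measurableSet)
  rwa [refl3_preimage_sphere] at h2

lemma trig_sq (p q α β : ℝ) :
    (p * Real.sin α + q * Real.cos α)^2 - (p * Real.sin β + q * Real.cos β)^2 =
      Real.sin (α - β) * (2*p*q*Real.cos (α+β) - (q^2 - p^2) * Real.sin (α+β)) := by
  have ha := sin_sq_add_cos_sq α
  have hb := sin_sq_add_cos_sq β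
  rw [Real.sin_sub, Real.sin_add, Real.cos_add]
  linear_combination (q^2 + 2*p*q*Real.sin β*Real.cos β - (q^2-p^2)*Real.sin β^2) * ha +
    (-(q^2) - 2*p*q*Real.sin α*Real.cos α + (q^2-p^2)*Real.sin α^2) * hb

lemma abs_le_abs_of_sq (a b : ℝ) (h : a^2 ≤ b^2) : |a| ≤ |b| := by
  have := Real.sqrt_le_sqrt h
  rwa [Real.sqrt_sq_eq_abs, Real.sqrt_sq_eq_abs] at this

-- main trig lemma
lemma trig_key {p q φ φ' : ℝ} (h0 : 0 ≤ φ) (hle : φ ≤ φ') (h2 : φ' ≤ π/2)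
    (hyp : |p * Real.sin (φ + φ') + q * Real.cos (φ + φ')| ≤ |q|) :
    |p * Real.sin φ' + q * Real.cos φ'| ≤ |p * Real.sin φ + q * Real.cos φ| := by
  set W := 2*p*q*Real.cos (φ+φ') - (q^2 - p^2) * Real.sin (φ+φ') with hW
  have hsq : (p * Real.sin (φ + φ') + q * Real.cos (φ + φ'))^2 ≤ q^2 := by
    nlinarith [sq_abs (p * Real.sin (φ + φ') + q * Real.cos (φ + φ')), sq_abs q,
      abs_nonneg (p * Real.sin (φ + φ') + q * Real.cos (φ + φ')), abs_nonneg q,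
      mul_self_le_mul_self (abs_nonneg (p * Real.sin (φ + φ') + q * Real.cos (φ + φ'))) hyp]
  -- q^2 - (..)^2 = sin(0 - (φ+φ')) * W' where W' uses sum 0+(φ+φ')... use trig_sq with α = 0, β = φ+φ'
  have h1 : q^2 - (p * Real.sin (φ + φ') + q * Real.cos (φ + φ'))^2 =
      - Real.sin (φ+φ') * W := by
    have h := trig_sq p q 0 (φ+φ')
    simp only [Real.sin_zero, Real.cos_zero, mul_zero, mul_one, zero_add, zero_sub,
      Real.sin_neg] at h
    linear_combination h
  have hsinsum : 0 ≤ Real.sin (φ + φ') := by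
    apply Real.sin_nonneg_of_nonneg_of_le_pi <;> [linarith; linarith [pi_pos]]
  have hsindiff : 0 ≤ Real.sin (φ' - φ) := by
    apply Real.sin_nonneg_of_nonneg_of_le_pi <;> [linarith; linarith [pi_pos]]
  apply abs_le_abs_of_sq
  have h2' : (p * Real.sin φ + q * Real.cos φ)^2 - (p * Real.sin φ' + q * Real.cos φ')^2 =
      - Real.sin (φ' - φ) * W := by
    have h := trig_sq p q φ φ'
    rw [show φ - φ' = -(φ' - φ) by ring, Real.sin_neg] at h
    linear_combination h
  rcases le_or_gt W 0 with hW0 | hW0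
  · nlinarith
  · -- then sin(φ+φ') ≤ 0 hence = 0, so φ = φ'
    have hs0 : Real.sin (φ + φ') = 0 := by nlinarith
    have : φ = φ' := by
      rcases lt_or_eq_of_le hle with hlt | heq
      · exfalso
        have hpos : 0 < Real.sin (φ + φ') := by
          apply Real.sin_pos_of_pos_of_lt_pi
          · linarith
          · linarith [pi_pos]
        linarith
      · exact heq
    rw [this]

lemma sphere_sum_sq {y : E3} (hy : y ∈ Metric.sphere (0:E3) 1) :
    y 0 ^ 2 + y 1 ^ 2 + y 2 ^ 2 = 1 := by
  have h : ‖y‖ = 1 := by simpa using hy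
  rw [EuclideanSpace.norm_eq] at h
  have h2 : Real.sqrt (∑ i, ‖y i‖^2) ^ 2 = 1 := by rw [h]; norm_num
  rw [Real.sq_sqrt (by positivity)] at h2
  simpa [Fin.sum_univ_three, sq_abs] using h2

noncomputable def sphParam (x : Fin 2 → ℝ) : E3 :=
  (WithLp.equiv 2 (Fin 3 → ℝ)).symm
    ![Real.sin (x 0) * Real.cos (x 1), Real.sin (x 0) * Real.sin (x 1), Real.cos (x 0)]

lemma sphParam_apply (a b : ℝ) : sphParam ![a, b] =
    (WithLp.equiv 2 (Fin 3 → ℝ)).symm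
      ![Real.sin a * Real.cos b, Real.sin a * Real.sin b, Real.cos a] := by
  simp [sphParam]

lemma vec_mem_Icc (a b : ℝ) (h1 : -π ≤ a) (h2 : a ≤ π) (h3 : -π ≤ b) (h4 : b ≤ π) :
    ![a,b] ∈ Set.Icc (fun _ : Fin 2 => -π) (fun _ => π) := by
  rw [Set.mem_Icc]
  constructor <;> (rw [Pi.le_def]; intro i; fin_cases i)
  · exact h1
  · exact h3
  · exact h2
  · exact h4

lemma sphere_subset_param :
    Metric.sphere (0:E3) 1 ⊆ sphParam '' (Set.Icc (fun _ => -π) (fun _ => π)) := by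
  intro y hy
  have hsum := sphere_sum_sq hy
  have hy2 : |y 2| ≤ 1 := abs_le_one_iff_mul_self_le_one.mpr (by nlinarith)
  have hy2' := abs_le.mp hy2
  set θ := Real.arccos (y 2) with hθ
  have hcos : Real.cos θ = y 2 := Real.cos_arccos hy2'.1 hy2'.2
  have hsin : Real.sin θ = Real.sqrt (1 - (y 2)^2) := by rw [hθ]; exact Real.sin_arccos _
  have h1my2 : 1 - (y 2)^2 = y 0 ^2 + y 1 ^2 := by linarith
  have hθmem : 0 ≤ θ ∧ θ ≤ π := ⟨Real.arccos_nonneg _, Real.arccos_le_pi _⟩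
  rcases eq_or_lt_of_le (by positivity : (0:ℝ) ≤ y 0 ^2 + y 1 ^2) with hzero | hpos
  · -- y 0 = 0 and y 1 = 0
    have hy0 : y 0 = 0 := by nlinarith
    have hy1 : y 1 = 0 := by nlinarith
    refine ⟨![θ, 0], ?_, ?_⟩
    · exact vec_mem_Icc _ _ (by linarith [Real.pi_pos]) hθmem.2 (by linarith [Real.pi_pos]) (by linarith [Real.pi_pos])
    · have hsin0 : Real.sin θ = 0 := by
        rw [hsin, h1my2, ← hzero]; simp
      rw [sphParam_apply]
      refine PiLp.ext fun i => ?_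
      fin_cases i
      · show Real.sin θ * Real.cos 0 = y 0
        rw [Real.cos_zero, hsin0, hy0]; ring
      · show Real.sin θ * Real.sin 0 = y 1
        rw [Real.sin_zero, hsin0, hy1]; ring
      · show Real.cos θ = y 2
        exact hcos
  · set z : ℂ := ⟨y 0, y 1⟩ with hz
    have hzre : z.re = y 0 := rfl
    have hzim : z.im = y 1 := rfl
    have habs : ‖z‖ = Real.sqrt (y 0 ^2 + y 1 ^2) := by
      rw [Complex.norm_def, Complex.normSq_apply, hzre, hzim]; ring_nf
    have habspos : 0 < ‖z‖ := by rw [habs]; positivity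
    have hzne : z ≠ 0 := by
      intro h; rw [h] at habspos; simp at habspos
    set ψ := z.arg with hψ
    have hcosψ : Real.cos ψ = y 0 / ‖z‖ := by rw [hψ, Complex.cos_arg hzne, hzre]
    have hsinψ : Real.sin ψ = y 1 / ‖z‖ := by rw [hψ, Complex.sin_arg, hzim]
    have hsinθ : Real.sin θ = ‖z‖ := by rw [hsin, h1my2, habs]
    refine ⟨![θ, ψ], ?_, ?_⟩
    · exact vec_mem_Icc _ _ (by linarith [Real.pi_pos]) hθmem.2
        (by linarith [Complex.neg_pi_lt_arg z]) (Complex.arg_le_pi z)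
    · rw [sphParam_apply]
      refine PiLp.ext fun i => ?_
      fin_cases i
      · show Real.sin θ * Real.cos ψ = y 0
        rw [hsinθ, hcosψ]; field_simp
      · show Real.sin θ * Real.sin ψ = y 1
        rw [hsinθ, hsinψ]; field_simp
      · exact hcos

lemma abs_sin_sub (a b : ℝ) : |Real.sin a - Real.sin b| ≤ |a - b| := by
  have h1 := Real.abs_sin_le_abs (x := (a-b)/2)
  have h2 := Real.abs_cos_le_one ((a+b)/2)
  have h3 : |(a-b)/2| = |a-b|/2 := by rw [abs_div, abs_two]
  rw [Real.sin_sub_sin, abs_mul, abs_mul, abs_two]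
  nlinarith [abs_nonneg (Real.sin ((a-b)/2)), abs_nonneg (Real.cos ((a+b)/2)), abs_nonneg (a-b)]

lemma abs_cos_sub (a b : ℝ) : |Real.cos a - Real.cos b| ≤ |a - b| := by
  have h1 := Real.abs_sin_le_abs (x := (a-b)/2)
  have h2 := Real.abs_sin_le_one ((a+b)/2)
  have h3 : |(a-b)/2| = |a-b|/2 := by rw [abs_div, abs_two]
  rw [Real.cos_sub_cos, abs_mul, abs_mul, show |(-2:ℝ)| = 2 by norm_num]
  nlinarith [abs_nonneg (Real.sin ((a-b)/2)), abs_nonneg (Real.sin ((a+b)/2)), abs_nonneg (a-b)]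

lemma sphParam_lipschitz : LipschitzWith 3 sphParam := by
  apply LipschitzWith.of_dist_le_mul
  intro x y
  have hd0 : |x 0 - y 0| ≤ dist x y := by
    have := dist_le_pi_dist x y 0; rwa [Real.dist_eq] at this
  have hd1 : |x 1 - y 1| ≤ dist x y := by
    have := dist_le_pi_dist x y 1; rwa [Real.dist_eq] at this
  have hdn : 0 ≤ dist x y := dist_nonneg
  have key : ∀ a b c d : ℝ, |Real.sin a * Real.cos b - Real.sin c * Real.cos d| ≤ |a - c| + |b - d| := by
    intro a b c d
    have h1 : Real.sin a * Real.cos b - Real.sin c * Real.cos d =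
        (Real.sin a - Real.sin c) * Real.cos b + Real.sin c * (Real.cos b - Real.cos d) := by ring
    rw [h1]
    have h2 := abs_add_le ((Real.sin a - Real.sin c) * Real.cos b) (Real.sin c * (Real.cos b - Real.cos d))
    rw [abs_mul, abs_mul] at h2
    nlinarith [abs_sin_sub a c, abs_cos_sub b d, Real.abs_cos_le_one b, Real.abs_sin_le_one c,
      abs_nonneg (Real.sin a - Real.sin c), abs_nonneg (Real.cos b - Real.cos d),
      abs_nonneg (Real.cos b), abs_nonneg (Real.sin c)]
  have key2 : ∀ a b c d : ℝ, |Real.sin a * Real.sin b - Real.sin c * Real.sin d| ≤ |a - c| + |b - d| := by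
    intro a b c d
    have h := key a (π/2 - b) c (π/2 - d)
    rw [Real.cos_pi_div_two_sub, Real.cos_pi_div_two_sub] at h
    rw [show π/2 - b - (π/2 - d) = -(b - d) by ring, abs_neg] at h
    exact h
  rw [EuclideanSpace.dist_eq]
  have e0 : |sphParam x 0 - sphParam y 0| ≤ 2 * dist x y := by
    simp only [sphParam, WithLp.equiv_symm_apply, PiLp.toLp_apply, Matrix.cons_val_zero]
    calc |Real.sin (x 0) * Real.cos (x 1) - Real.sin (y 0) * Real.cos (y 1)|
        ≤ |x 0 - y 0| + |x 1 - y 1| := key _ _ _ _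
      _ ≤ 2 * dist x y := by linarith
  have e1 : |sphParam x 1 - sphParam y 1| ≤ 2 * dist x y := by
    simp only [sphParam, WithLp.equiv_symm_apply, PiLp.toLp_apply, Matrix.cons_val_one, Matrix.head_cons]
    calc |Real.sin (x 0) * Real.sin (x 1) - Real.sin (y 0) * Real.sin (y 1)|
        ≤ |x 0 - y 0| + |x 1 - y 1| := key2 _ _ _ _
      _ ≤ 2 * dist x y := by linarith
  have e2 : |sphParam x 2 - sphParam y 2| ≤ dist x y := by
    simp only [sphParam, WithLp.equiv_symm_apply, PiLp.toLp_apply]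
    calc |Real.cos (x 0) - Real.cos (y 0)| ≤ |x 0 - y 0| := abs_cos_sub _ _
      _ ≤ dist x y := hd0
  calc Real.sqrt (∑ i, dist (sphParam x i) (sphParam y i) ^ 2)
      ≤ Real.sqrt ((3 * dist x y)^2) := by
        apply Real.sqrt_le_sqrt
        rw [Fin.sum_univ_three]
        simp only [Real.dist_eq]
        nlinarith [sq_abs (sphParam x 0 - sphParam y 0), sq_abs (sphParam x 1 - sphParam y 1),
          sq_abs (sphParam x 2 - sphParam y 2), abs_nonneg (sphParam x 0 - sphParam y 0),
          abs_nonneg (sphParam x 1 - sphParam y 1), abs_nonneg (sphParam x 2 - sphParam y 2)]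
    _ = 3 * dist x y := by rw [Real.sqrt_sq (by positivity)]
    _ = (3:NNReal) * dist x y := by norm_num

lemma sphere_hmeas_lt_top : μH[2] (Metric.sphere (0:E3) 1) < ⊤ := by
  have h1 : μH[2] (Metric.sphere (0:E3) 1)
      ≤ μH[2] (sphParam '' (Set.Icc (fun _ : Fin 2 => -π) (fun _ => π))) :=
    measure_mono sphere_subset_param
  have h2 := sphParam_lipschitz.hausdorffMeasure_image_le (d := 2) (by norm_num)
    (Set.Icc (fun _ : Fin 2 => -π) (fun _ => π))
  have h3 : (μH[2] : Measure (Fin 2 → ℝ)) = volume := by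
    have h := MeasureTheory.hausdorffMeasure_pi_real (ι := Fin 2)
    rw [Fintype.card_fin] at h
    simpa using h
  rw [h3] at h2
  refine lt_of_le_of_lt (h1.trans h2) ?_
  apply ENNReal.mul_lt_top
  · simp
  · exact isCompact_Icc.measure_lt_top

-- MAIN THEOREM PART (to be appended)
theorem sphere_integral_antitone (g₁ g₂ : ℝ → ℝ)
    (h₁even : ∀ t, g₁ (-t) = g₁ t) (h₂even : ∀ t, g₂ (-t) = g₂ t)
    (h₁nonneg : ∀ t ∈ Set.Icc (-1:ℝ) 1, 0 ≤ g₁ t)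
    (h₂nonneg : ∀ t ∈ Set.Icc (-1:ℝ) 1, 0 ≤ g₂ t)
    (h₁mono : MonotoneOn g₁ (Set.Icc 0 1)) (h₂mono : MonotoneOn g₂ (Set.Icc 0 1)) :
    AntitoneOn
      (fun φ : ℝ =>
        ∫ y in Metric.sphere (0 : EuclideanSpace ℝ (Fin 3)) 1,
          g₁ ⟪y, (WithLp.equiv 2 (Fin 3 → ℝ)).symm ![Real.sin φ, 0, Real.cos φ]⟫ *
          g₂ ⟪y, (WithLp.equiv 2 (Fin 3 → ℝ)).symm ![0, 0, 1]⟫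
          ∂(μH[2]))
      (Set.Icc 0 (π / 2)) := by
  intro φ hφ φ' hφ' hle
  obtain ⟨hφ0, hφπ⟩ := hφ
  obtain ⟨hφ'0, hφ'π⟩ := hφ'
  -- clamped versions of g₁ g₂
  set k₁ : ℝ → ℝ := fun t => g₁ (min (max t 0) 1) with hk₁def
  set k₂ : ℝ → ℝ := fun t => g₂ (min (max t 0) 1) with hk₂def
  have hclampmem : ∀ t : ℝ, min (max t 0) 1 ∈ Set.Icc (0:ℝ) 1 := fun t =>
    ⟨le_min (le_max_right _ _) zero_le_one, min_le_right _ _⟩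
  have hk₁mono : Monotone k₁ := fun a b hab =>
    h₁mono (hclampmem a) (hclampmem b) (min_le_min (max_le_max hab le_rfl) le_rfl)
  have hk₂mono : Monotone k₂ := fun a b hab =>
    h₂mono (hclampmem a) (hclampmem b) (min_le_min (max_le_max hab le_rfl) le_rfl)
  have hmemIcc : ∀ t : ℝ, min (max t 0) 1 ∈ Set.Icc (-1:ℝ) 1 := fun t =>
    ⟨le_trans (by norm_num) (hclampmem t).1, (hclampmem t).2⟩
  have hk₁nonneg : ∀ t, 0 ≤ k₁ t := fun t => h₁nonneg _ (hmemIcc t)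
  have hk₂nonneg : ∀ t, 0 ≤ k₂ t := fun t => h₂nonneg _ (hmemIcc t)
  have habs_eq : ∀ (g : ℝ → ℝ), (∀ t, g (-t) = g t) → ∀ t : ℝ, |t| ≤ 1 →
      g t = g (min (max |t| 0) 1) := by
    intro g hgeven t ht
    rw [max_eq_left (abs_nonneg t), min_eq_left ht]
    rcases le_or_gt 0 t with h | h
    · rw [abs_of_nonneg h]
    · rw [abs_of_neg h, hgeven]
  have hk₁eq : ∀ t : ℝ, |t| ≤ 1 → g₁ t = k₁ |t| := fun t ht => habs_eq g₁ h₁even t ht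
  have hk₂eq : ∀ t : ℝ, |t| ≤ 1 → g₂ t = k₂ |t| := fun t ht => habs_eq g₂ h₂even t ht
  -- the sphere and restricted measure
  set S : Set E3 := Metric.sphere (0:E3) 1 with hSdef
  have hSmeas : MeasurableSet S := Metric.isClosed_sphere.measurableSet
  set μ : Measure E3 := (μH[2] : Measure E3).restrict S with hμdef
  -- replacement integrand
  set A : ℝ → E3 → ℝ := fun α y => k₁ |y 0 * Real.sin α + y 2 * Real.cos α| * k₂ |y 2| with hAdef
  have hAnonneg : ∀ α y, 0 ≤ A α y := fun α y =>
    mul_nonneg (hk₁nonneg _) (hk₂nonneg _)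
  -- measurability
  have hproj : ∀ i : Fin 3, Measurable fun y : E3 => y i := by
    intro i
    have : Continuous fun y : E3 => y i := by
      have h1 : Continuous fun y : E3 => (WithLp.equiv 2 (Fin 3 → ℝ)) y := by
        exact PiLp.continuous_ofLp 2 (fun _ : Fin 3 => ℝ)
      exact (continuous_apply i).comp h1
    exact this.measurable
  have hAmeas : ∀ α, Measurable (A α) := by
    intro α
    apply Measurable.mul
    · exact hk₁mono.measurable.comp (((hproj 0).mul_const _).add ((hproj 2).mul_const _)).abs
    · exact hk₂mono.measurable.comp (hproj 2).abs
  -- inner products on the sphere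
  have hy_abs : ∀ α : ℝ, ∀ y ∈ S, |y 0 * Real.sin α + y 2 * Real.cos α| ≤ 1 := by
    intro α y hy
    have h1 : |⟪y, uvec α⟫| ≤ ‖y‖ * ‖uvec α‖ := abs_real_inner_le_norm y (uvec α)
    rw [inner_uvec, norm_uvec, mem_sphere_zero_iff_norm.mp hy] at h1
    simpa using h1
  have hy2_abs : ∀ y ∈ S, |y 2| ≤ 1 := by
    intro y hy
    have := hy_abs 0 y hy
    simpa using this
  -- step 1 : rewrite both integrals
  have hcongr : ∀ α : ℝ,
      (∫ y in Metric.sphere (0 : EuclideanSpace ℝ (Fin 3)) 1,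
          g₁ ⟪y, (WithLp.equiv 2 (Fin 3 → ℝ)).symm ![Real.sin α, 0, Real.cos α]⟫ *
          g₂ ⟪y, (WithLp.equiv 2 (Fin 3 → ℝ)).symm ![0, 0, 1]⟫ ∂(μH[2]))
        = ∫ y, A α y ∂μ := by
    intro α
    apply setIntegral_congr_fun hSmeas
    intro y hy
    have h1 := inner_uvec y α
    have h2 := inner_e3 y
    dsimp only
    rw [show (WithLp.equiv 2 (Fin 3 → ℝ)).symm ![Real.sin α, 0, Real.cos α] = uvec α from rfl,
      h1, h2, hk₁eq _ (hy_abs α y hy), hk₂eq _ (hy2_abs y hy)]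
  -- step 2 : as lintegrals
  set L : ℝ → ℝ≥0∞ := fun α => ∫⁻ y, ENNReal.ofReal (A α y) ∂μ with hLdef
  have hint : ∀ α : ℝ, (∫ y, A α y ∂μ) = (L α).toReal := by
    intro α
    rw [integral_eq_lintegral_of_nonneg_ae (ae_of_all _ (hAnonneg α))
      ((hAmeas α).aestronglyMeasurable)]
  -- finiteness
  have hLne : ∀ α : ℝ, L α ≠ ⊤ := by
    intro α
    have hb : ∀ᵐ y ∂μ, ENNReal.ofReal (A α y) ≤ ENNReal.ofReal (k₁ 1 * k₂ 1) := by
      rw [hμdef]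
      refine (ae_restrict_iff' hSmeas).2 (ae_of_all _ ?_)
      intro y hy
      apply ENNReal.ofReal_le_ofReal
      apply mul_le_mul (hk₁mono (hy_abs α y hy)) (hk₂mono (hy2_abs y hy)) (hk₂nonneg _)
        (hk₁nonneg _)
    have := lintegral_mono_ae hb
    rw [lintegral_const] at this
    apply ne_top_of_le_ne_top _ this
    apply ENNReal.mul_ne_top ENNReal.ofReal_ne_top
    rw [hμdef, Measure.restrict_apply_univ]
    exact sphere_hmeas_lt_top.ne
  -- step 3 : the reflection argument
  have hmain : L φ' ≤ L φ := by
    set ψ := φ + φ' with hψdef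
    have hMP := refl3_measurePreserving ψ
    have hσmeas : Measurable (refl3 ψ) := (refl3_isometry ψ).continuous.measurable
    -- pointwise inequality
    have hpt : ∀ y : E3,
        ENNReal.ofReal (A φ' y) + ENNReal.ofReal (A φ' (refl3 ψ y)) ≤
        ENNReal.ofReal (A φ y) + ENNReal.ofReal (A φ (refl3 ψ y)) := by
      intro y
      -- reduce to a real inequality
      rw [← ENNReal.ofReal_add (hAnonneg _ _) (hAnonneg _ _),
        ← ENNReal.ofReal_add (hAnonneg _ _) (hAnonneg _ _)]
      apply ENNReal.ofReal_le_ofReal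
      simp only [hAdef]
      rw [refl3_0, refl3_2]
      set p := y 0 with hp
      set q := y 2 with hq
      set p' := -Real.cos ψ * p + Real.sin ψ * q with hp'
      set q' := Real.sin ψ * p + Real.cos ψ * q with hq'
      -- note refl3 of refl3
      have hinv : Real.sin ψ * p' + Real.cos ψ * q' = q := by
        have h := refl3_invol ψ y
        have h2 := congrFun (congrArg WithLp.ofLp h) 2
        rw [refl3_2, refl3_0, refl3_2] at h2
        exact h2
      -- inner products at the reflected point
      have hrefl_inner : ∀ α : ℝ, p' * Real.sin α + q' * Real.cos α =
          p * Real.sin (ψ - α) + q * Real.cos (ψ - α) := by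
        intro α
        rw [Real.sin_sub, Real.cos_sub, hp', hq']
        ring
      have hψφ : ψ - φ = φ' := by rw [hψdef]; ring
      have hψφ' : ψ - φ' = φ := by rw [hψdef]; ring
      set a := k₁ |p * Real.sin φ + q * Real.cos φ| with ha
      set a' := k₁ |p * Real.sin φ' + q * Real.cos φ'| with ha'
      set b := k₂ |q| with hb
      set b' := k₂ |q'| with hb'
      have goal_eq : a' * b + (k₁ |p' * Real.sin φ + q' * Real.cos φ| * b') ≤
          a * b + (k₁ |p' * Real.sin φ' + q' * Real.cos φ'| * b') →
          a' * b + (k₁ |p' * Real.sin φ + q' * Real.cos φ| * b') ≤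
          a * b + (k₁ |p' * Real.sin φ' + q' * Real.cos φ'| * b') := id
      rw [show p' * Real.sin φ + q' * Real.cos φ = p * Real.sin φ' + q * Real.cos φ' by
          rw [hrefl_inner φ, hψφ],
        show p' * Real.sin φ' + q' * Real.cos φ' = p * Real.sin φ + q * Real.cos φ by
          rw [hrefl_inner φ', hψφ']]
      -- now goal : a' * b + a * b' ≤ a * b + a' * b'
      rcases le_total |q'| |q| with hcase | hcase
      · have hbb : b' ≤ b := hk₂mono hcase
        have haa : a' ≤ a := by
          apply hk₁mono
          apply trig_key hφ0 hle hφ'π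
          rw [show p * Real.sin (φ + φ') + q * Real.cos (φ + φ') = q' by
            rw [hq', hψdef]; ring]
          exact hcase
        have h1 := hk₁nonneg |p * Real.sin φ + q * Real.cos φ|
        have h2 := hk₂nonneg |q'|
        nlinarith [mul_nonneg (sub_nonneg.2 haa) (sub_nonneg.2 hbb)]
      · have hbb : b ≤ b' := hk₂mono hcase
        have haa : a ≤ a' := by
          apply hk₁mono
          have := trig_key hφ0 hle hφ'π (p := p') (q := q') (by
            rw [show p' * Real.sin (φ + φ') + q' * Real.cos (φ + φ') = q by
              rw [← hinv, hψdef]; ring]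
            exact hcase)
          rw [hrefl_inner φ', hrefl_inner φ, hψφ, hψφ'] at this
          exact this
        nlinarith [mul_nonneg (sub_nonneg.2 haa) (sub_nonneg.2 hbb)]
    -- lintegral computation
    have hcomp : ∀ α : ℝ, (∫⁻ y, ENNReal.ofReal (A α (refl3 ψ y)) ∂μ) = L α := by
      intro α
      exact hMP.lintegral_comp ((ENNReal.measurable_ofReal.comp (hAmeas α)))
    have hsum : L φ' + L φ' ≤ L φ + L φ := by
      calc L φ' + L φ'
          = (∫⁻ y, ENNReal.ofReal (A φ' y) ∂μ) + ∫⁻ y, ENNReal.ofReal (A φ' (refl3 ψ y)) ∂μ := by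
            rw [hcomp φ']
        _ = ∫⁻ y, (ENNReal.ofReal (A φ' y) + ENNReal.ofReal (A φ' (refl3 ψ y))) ∂μ :=
            (lintegral_add_left ((hAmeas φ').ennreal_ofReal) _).symm
        _ ≤ ∫⁻ y, (ENNReal.ofReal (A φ y) + ENNReal.ofReal (A φ (refl3 ψ y))) ∂μ :=
            lintegral_mono hpt
        _ = (∫⁻ y, ENNReal.ofReal (A φ y) ∂μ) + ∫⁻ y, ENNReal.ofReal (A φ (refl3 ψ y)) ∂μ :=
            lintegral_add_left ((hAmeas φ).ennreal_ofReal) _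
        _ = L φ + L φ := by rw [hcomp φ]
    by_contra hcon
    push_neg at hcon
    exact absurd hsum (not_le.2 (ENNReal.add_lt_add hcon hcon))
  -- conclude
  show (∫ y in Metric.sphere (0 : EuclideanSpace ℝ (Fin 3)) 1,
          g₁ ⟪y, (WithLp.equiv 2 (Fin 3 → ℝ)).symm ![Real.sin φ', 0, Real.cos φ']⟫ *
          g₂ ⟪y, (WithLp.equiv 2 (Fin 3 → ℝ)).symm ![0, 0, 1]⟫ ∂(μH[2]))
      ≤ (∫ y in Metric.sphere (0 : EuclideanSpace ℝ (Fin 3)) 1,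
          g₁ ⟪y, (WithLp.equiv 2 (Fin 3 → ℝ)).symm ![Real.sin φ, 0, Real.cos φ]⟫ *
          g₂ ⟪y, (WithLp.equiv 2 (Fin 3 → ℝ)).symm ![0, 0, 1]⟫ ∂(μH[2]))
  rw [hcongr φ, hcongr φ', hint φ, hint φ']
  exact ENNReal.toReal_mono (hLne φ) hmain
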